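/- Let (R, m) be a Noetherian local domain with m ≠ 0 and let I be a proper ideal of R. If p ≥ q ≥ 1 are integers such that m^p is contained in the integral closure of (m·I)^q, then m^(p−q) is contained in the integral closure of I^q. -/

import Mathlib

open Finset IsLocalRing

/-- The set of elements integral over an ideal `I`: `x` is integral over `I` if it satisfies
an equation `x ^ k + c 1 * x ^ (k-1) + ⋯ + c k = 0` with `c i ∈ I ^ i`. -/
def integralClosureIdeal {R : Type*} [CommRing R] (I : Ideal R) : Set R :=
  {x | ∃ k : ℕ, 1 ≤ k ∧ ∃ c : ℕ → R, (∀ i, 1 ≤ i → i ≤ k → c i ∈ I ^ i) ∧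
    x ^ k + ∑ i ∈ Finset.Icc 1 k, c i * x ^ (k - i) = 0}

/-- `Λ(I)`: the set of rationals `r/s` (as real numbers) with `r, s` positive integers such that
`m ^ r` is contained in the integral closure of `I ^ s`. -/
def Lambda (R : Type*) [CommRing R] [IsLocalRing R] (I : Ideal R) : Set ℝ :=
  {x | ∃ r s : ℕ, 0 < r ∧ 0 < s ∧
    ((maximalIdeal R ^ r : Ideal R) : Set R) ⊆ integralClosureIdeal (I ^ s) ∧
    x = (r : ℝ) / (s : ℝ)}

/-- The Łojasiewicz exponent `𝓛₀(I)`, the infimum of `Λ(I)`. -/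
noncomputable def Loj (R : Type*) [CommRing R] [IsLocalRing R] (I : Ideal R) : ℝ :=
  sInf (Lambda R I)

section auxiliaryLemmas

variable {R : Type*} [CommRing R]

lemma idealSum_le {ι : Type*} (s : Finset ι) (f : ι → Ideal R) (T : Ideal R)
    (h : ∀ i ∈ s, f i ≤ T) : (∑ i ∈ s, f i) ≤ T := by
  classical
  induction s using Finset.induction_on with
  | empty => simp
  | @insert a s' hx ih =>
    rw [Finset.sum_insert hx, Submodule.add_eq_sup]
    exact sup_le (h a (Finset.mem_insert_self a s'))
      (ih fun i hi => h i (Finset.mem_insert_of_mem hi))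

lemma le_idealSum {ι : Type*} (s : Finset ι) (f : ι → Ideal R) {i : ι} (hi : i ∈ s) :
    f i ≤ ∑ j ∈ s, f j :=
  Finset.single_le_sum (f := f) (fun _ _ => bot_le) hi

/-- Binomial-type inequality for ideals. -/
lemma add_pow_le_sum (A B : Ideal R) (n : ℕ) :
    (A + B) ^ n ≤ ∑ i ∈ Finset.range (n + 1), A ^ i * B ^ (n - i) := by
  induction n with
  | zero => simp
  | succ n ih =>
    rw [pow_succ]
    calc (A + B) ^ n * (A + B) ≤ (∑ i ∈ Finset.range (n + 1), A ^ i * B ^ (n - i)) * (A + B) :=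
          Ideal.mul_mono_left ih
      _ = ∑ i ∈ Finset.range (n + 1), (A ^ i * B ^ (n - i) * A + A ^ i * B ^ (n - i) * B) := by
          rw [Finset.sum_mul]; exact Finset.sum_congr rfl fun i _ => mul_add _ _ _
      _ ≤ ∑ i ∈ Finset.range (n + 2), A ^ i * B ^ (n + 1 - i) := by
          apply idealSum_le
          intro i hi
          rw [Finset.mem_range] at hi
          rw [Submodule.add_eq_sup]
          apply sup_le
          · have h2 : A ^ i * B ^ (n - i) * A = A ^ (i+1) * B ^ (n + 1 - (i+1)) := by
              rw [Nat.succ_sub_succ, pow_succ]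
              ring
            rw [h2]
            exact le_idealSum (Finset.range (n+2)) (fun j => A ^ j * B ^ (n + 1 - j))
              (i := i+1) (Finset.mem_range.mpr (by omega))
          · have h3 : A ^ i * B ^ (n - i) * B = A ^ i * B ^ (n + 1 - i) := by
              have : n + 1 - i = (n - i) + 1 := by omega
              rw [this, pow_succ, mul_assoc]
            rw [h3]
            exact le_idealSum (Finset.range (n+2)) (fun j => A ^ j * B ^ (n + 1 - j))
              (i := i) (Finset.mem_range.mpr (by omega))

lemma integralClosureIdeal_mono {J J' : Ideal R} (h : J ≤ J') :
    integralClosureIdeal J ⊆ integralClosureIdeal J' := by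
  rintro x ⟨k, hk, c, hc, he⟩
  exact ⟨k, hk, c, fun i h1 h2 => Ideal.pow_right_mono h i (hc i h1 h2), he⟩

lemma pow_mul_pow_le (J L S : Ideal R) (hJ : J ≤ L) (hS : S ≤ L) {i t k : ℕ}
    (hi : 1 ≤ i) (hik : i + t = k) : J ^ i * S ^ t ≤ J * L ^ (k - 1) := by
  obtain ⟨i', rfl⟩ : ∃ i', i = i' + 1 := ⟨i - 1, by omega⟩
  rw [pow_succ', mul_assoc]
  refine Ideal.mul_mono_right ?_
  calc J ^ i' * S ^ t ≤ L ^ i' * L ^ t :=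
        Ideal.mul_mono (Ideal.pow_right_mono hJ _) (Ideal.pow_right_mono hS _)
    _ = L ^ (k - 1) := by rw [← pow_add]; congr 1; omega

/-- A single element integral over `J` gives a "reduction"-type relation. -/
lemma red_single (J : Ideal R) (z : R) (hz : z ∈ integralClosureIdeal J) :
    ∃ k, 1 ≤ k ∧ (J + Ideal.span {z}) ^ k ≤ J * (J + Ideal.span {z}) ^ (k - 1) := by
  obtain ⟨k, hk, c, hc, he⟩ := hz
  set L := J + Ideal.span {z} with hL
  refine ⟨k, hk, ?_⟩
  refine le_trans (add_pow_le_sum J (Ideal.span {z}) k) ?_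
  apply idealSum_le
  intro i hi
  rw [Finset.mem_range] at hi
  rcases Nat.eq_zero_or_pos i with h0 | hpos
  · subst h0
    rw [pow_zero, one_mul, Nat.sub_zero, Ideal.span_singleton_pow, Ideal.span_le]
    intro y hy
    rw [Set.mem_singleton_iff] at hy
    subst hy
    have hzk : z ^ k = -(∑ i ∈ Finset.Icc 1 k, c i * z ^ (k - i)) := by
      linear_combination he
    rw [hzk]
    apply neg_mem
    apply Submodule.sum_mem
    intro j hj
    rw [Finset.mem_Icc] at hj
    have h1 : c j * z ^ (k - j) ∈ J ^ j * (Ideal.span {z}) ^ (k - j) :=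
      Ideal.mul_mem_mul (hc j hj.1 hj.2)
        (Ideal.pow_mem_pow (Ideal.mem_span_singleton_self z) _)
    exact pow_mul_pow_le J L (Ideal.span {z}) le_sup_left le_sup_right hj.1 (by omega) h1
  · exact pow_mul_pow_le J L (Ideal.span {z}) le_sup_left le_sup_right hpos (by omega)

/-- Transitivity of "reduction"-type relations. -/
lemma red_trans (A B C : Ideal R) (hBC : B ≤ C) {k₁ k₂ : ℕ}
    (h1 : 1 ≤ k₁) (h2 : 1 ≤ k₂) (H1 : B ^ k₁ ≤ A * B ^ (k₁ - 1))
    (H2 : C ^ k₂ ≤ B * C ^ (k₂ - 1)) :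
    ∃ k, 1 ≤ k ∧ C ^ k ≤ A * C ^ (k - 1) := by
  have key : ∀ t, C ^ (k₂ + t) ≤ B ^ (t + 1) * C ^ (k₂ - 1) := by
    intro t
    induction t with
    | zero => simpa using H2
    | succ t ih =>
      calc C ^ (k₂ + (t + 1)) = C ^ (k₂ + t) * C := by rw [← pow_succ, Nat.add_assoc]
        _ ≤ B ^ (t + 1) * C ^ (k₂ - 1) * C := Ideal.mul_mono_left ih
        _ = B ^ (t + 1) * C ^ k₂ := by
            rw [mul_assoc, ← pow_succ]
            congr 2
            omega
        _ ≤ B ^ (t + 1) * (B * C ^ (k₂ - 1)) := Ideal.mul_mono_right H2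
        _ = B ^ (t + 2) * C ^ (k₂ - 1) := by rw [← mul_assoc, ← pow_succ]
  refine ⟨k₁ + k₂ - 1, by omega, ?_⟩
  have e1 : k₁ + k₂ - 1 = k₂ + (k₁ - 1) := by omega
  rw [e1]
  calc C ^ (k₂ + (k₁ - 1)) ≤ B ^ (k₁ - 1 + 1) * C ^ (k₂ - 1) := key _
    _ = B ^ k₁ * C ^ (k₂ - 1) := by congr 2; omega
    _ ≤ (A * B ^ (k₁ - 1)) * C ^ (k₂ - 1) := Ideal.mul_mono_left H1
    _ ≤ (A * C ^ (k₁ - 1)) * C ^ (k₂ - 1) :=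
        Ideal.mul_mono_left (Ideal.mul_mono_right (Ideal.pow_right_mono hBC _))
    _ = A * C ^ (k₂ + (k₁ - 1) - 1) := by
        rw [mul_assoc, ← pow_add]
        congr 2
        omega

/-- An ideal contained in the integral closure of `J` gives a reduction relation
(in a Noetherian ring). -/
lemma exists_reduction [IsNoetherianRing R] (J K : Ideal R)
    (hK : (K : Set R) ⊆ integralClosureIdeal J) :
    ∃ k, 1 ≤ k ∧ (J + K) ^ k ≤ J * (J + K) ^ (k - 1) := by
  classical
  obtain ⟨S, hS⟩ := IsNoetherian.noetherian K
  have main : ∀ T : Finset R, (↑T : Set R) ⊆ (K : Set R) →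
      ∃ k, 1 ≤ k ∧ (J + Ideal.span (↑T : Set R)) ^ k
        ≤ J * (J + Ideal.span (↑T : Set R)) ^ (k - 1) := by
    intro T
    induction T using Finset.induction_on with
    | empty =>
      intro _
      refine ⟨1, le_refl _, ?_⟩
      simp
    | @insert z T hzT ih =>
      intro hsub
      have hT : (↑T : Set R) ⊆ (K : Set R) := by
        intro t ht
        exact hsub (by simp [ht])
      obtain ⟨k₁, hk₁, H₁⟩ := ih hT
      set L := J + Ideal.span (↑T : Set R) with hLdef
      have hzK : z ∈ (K : Set R) := hsub (by simp)
      have hz : z ∈ integralClosureIdeal L :=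
        integralClosureIdeal_mono (le_sup_left : J ≤ L) (hK hzK)
      obtain ⟨k₂, hk₂, H₂⟩ := red_single L z hz
      have hLL' : L + Ideal.span {z} = J + Ideal.span (↑(insert z T) : Set R) := by
        rw [Finset.coe_insert, Ideal.span_insert]
        rw [hLdef]
        simp only [Submodule.add_eq_sup]
        ac_rfl
      rw [hLL'] at H₂
      exact red_trans J L (J + Ideal.span (↑(insert z T) : Set R))
        (by rw [← hLL']; exact le_sup_left) hk₁ hk₂ H₁ H₂
  have hSsub : (↑S : Set R) ⊆ (K : Set R) := by
    intro t ht
    rw [← hS]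
    exact Ideal.subset_span ht
  obtain ⟨k, hk, H⟩ := main S hSsub
  have hS' : Ideal.span (↑S : Set R) = K := hS
  rw [hS'] at H
  exact ⟨k, hk, H⟩

/-- Determinant trick: if `x * N ⊆ J * N` for a nonzero ideal `N` of a Noetherian domain,
then `x` is integral over `J`. -/
lemma mem_integralClosureIdeal_of_mul_le [IsDomain R] [IsNoetherianRing R]
    (x : R) (J N : Ideal R) (hN : N ≠ ⊥) (hx : ∀ n ∈ N, x * n ∈ J * N) :
    x ∈ integralClosureIdeal J := by
  haveI : Module.Finite R N := Module.Finite.iff_fg.mpr (IsNoetherian.noetherian N)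
  set f : Module.End R N := Algebra.lsmul R R N x with hf
  have hrange : LinearMap.range f ≤ J • (⊤ : Submodule R N) := by
    rintro y ⟨n, rfl⟩
    rw [Submodule.mem_smul_top_iff, Ideal.smul_eq_mul]
    have hcoe : ((f n : N) : R) = x * (n : R) := rfl
    rw [hcoe]
    exact hx n n.2
  obtain ⟨P, hmon, -, hcoeff, haev⟩ :=
    LinearMap.exists_monic_and_coeff_mem_pow_and_aeval_eq_zero_of_range_le_smul R f J hrange
  obtain ⟨w, hwN, hw0⟩ := (Submodule.ne_bot_iff N).mp hN
  have heval0 : P.eval x = 0 := by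
    have h1 : Polynomial.aeval f P = Algebra.lsmul R R N (P.eval x) := by
      rw [hf, Polynomial.aeval_algHom_apply]
      congr 1
    have h2 : (Algebra.lsmul R R N (P.eval x)) ⟨w, hwN⟩ = 0 := by
      rw [← h1, haev]; rfl
    have h3 : P.eval x * w = 0 := by
      have := congrArg (Subtype.val) h2
      simpa [Algebra.lsmul_coe, smul_eq_mul] using this
    rcases mul_eq_zero.mp h3 with h | h
    · exact h
    · exact absurd h hw0
  set k := P.natDegree with hkdef
  have hk : 1 ≤ k := by
    by_contra hcon
    have hk0 : k = 0 := by omega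
    have : P = 1 := (hmon.natDegree_eq_zero).mp hk0
    rw [this] at heval0
    simp at heval0
  refine ⟨k, hk, fun i => P.coeff (k - i), fun i h1i hik => ?_, ?_⟩
  · have : k - (k - i) = i := by omega
    have h := hcoeff (k - i)
    rwa [this] at h
  · have hev : P.eval x = ∑ i ∈ Finset.range (k + 1), P.coeff i * x ^ i :=
      Polynomial.eval_eq_sum_range x
    rw [Finset.sum_range_succ, hmon.coeff_natDegree, one_mul] at hev
    have hreindex : ∑ i ∈ Finset.range k, P.coeff i * x ^ i
        = ∑ i ∈ Finset.Icc 1 k, P.coeff (k - i) * x ^ (k - i) := by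
      apply Finset.sum_nbij' (fun i => k - i) (fun j => k - j)
      · intro i hi; rw [Finset.mem_range] at hi; rw [Finset.mem_Icc]; omega
      · intro j hj; rw [Finset.mem_Icc] at hj; rw [Finset.mem_range]; omega
      · intro i hi; rw [Finset.mem_range] at hi; omega
      · intro j hj; rw [Finset.mem_Icc] at hj; omega
      · intro i hi; rw [Finset.mem_range] at hi
        have : k - (k - i) = i := by omega
        rw [this]
    rw [hreindex] at hev
    rw [add_comm] at hev
    rw [← hev, heval0]

/-- The key combinatorial bootstrapping: from the reduction-type inclusion for `m ^ P`,
deduce `m^(a*M) ≤ ∑_{B=1}^{M} I^(q*B) * m^(a*(M-B))` for all `M` with `a * M ≥ P`. -/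
lemma main_ind (m I : Ideal R) (a q P k : ℕ) (ha : 1 ≤ a) (hPk : a * k ≤ P)
    (hstar : m ^ P ≤ ∑ j ∈ Finset.Icc 1 k, m ^ (P - a * j) * I ^ (q * j)) :
    ∀ M, P ≤ a * M → m ^ (a * M) ≤ ∑ B ∈ Finset.Icc 1 M, I ^ (q * B) * m ^ (a * (M - B)) := by
  intro M
  induction M using Nat.strong_induction_on with
  | _ M ih =>
    intro hM
    have hkM : k ≤ M := by
      have : a * k ≤ a * M := le_trans hPk hM
      exact Nat.le_of_mul_le_mul_left this (by omega)
    have h1 : m ^ (a * M) = m ^ (a * M - P) * m ^ P := by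
      rw [← pow_add]; congr 1; omega
    rw [h1]
    calc m ^ (a * M - P) * m ^ P
        ≤ m ^ (a * M - P) * ∑ j ∈ Finset.Icc 1 k, m ^ (P - a * j) * I ^ (q * j) :=
          Ideal.mul_mono_right hstar
      _ = ∑ j ∈ Finset.Icc 1 k, m ^ (a * M - P) * (m ^ (P - a * j) * I ^ (q * j)) :=
          Finset.mul_sum _ _ _
      _ ≤ ∑ B ∈ Finset.Icc 1 M, I ^ (q * B) * m ^ (a * (M - B)) := by
          apply idealSum_le
          intro j hj
          rw [Finset.mem_Icc] at hj
          have hajP : a * j ≤ P := le_trans (Nat.mul_le_mul_left a hj.2) hPk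
          have h2 : m ^ (a * M - P) * (m ^ (P - a * j) * I ^ (q * j))
              = m ^ (a * (M - j)) * I ^ (q * j) := by
            have e2 : a * M - P + (P - a * j) = a * (M - j) := by
              rw [Nat.mul_sub]; omega
            rw [← mul_assoc, ← pow_add, e2]
          rw [h2]
          by_cases hc : P ≤ a * (M - j)
          · have hlt : M - j < M := by omega
            have ihj := ih (M - j) hlt hc
            calc m ^ (a * (M - j)) * I ^ (q * j)
                ≤ (∑ B' ∈ Finset.Icc 1 (M - j), I ^ (q * B') * m ^ (a * (M - j - B')))
                    * I ^ (q * j) := Ideal.mul_mono_left ihj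
              _ = ∑ B' ∈ Finset.Icc 1 (M - j),
                    I ^ (q * B') * m ^ (a * (M - j - B')) * I ^ (q * j) :=
                  Finset.sum_mul _ _ _
              _ ≤ ∑ B ∈ Finset.Icc 1 M, I ^ (q * B) * m ^ (a * (M - B)) := by
                  apply idealSum_le
                  intro B' hB'
                  rw [Finset.mem_Icc] at hB'
                  have h3 : I ^ (q * B') * m ^ (a * (M - j - B')) * I ^ (q * j)
                      = I ^ (q * (B' + j)) * m ^ (a * (M - (B' + j))) := by
                    have e1 : M - j - B' = M - (B' + j) := by omega
                    rw [mul_right_comm, ← pow_add, e1, Nat.mul_add]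
                  rw [h3]
                  exact le_idealSum (Finset.Icc 1 M)
                    (fun B => I ^ (q * B) * m ^ (a * (M - B))) (i := B' + j)
                    (Finset.mem_Icc.mpr ⟨by omega, by omega⟩)
          · rw [mul_comm]
            exact le_idealSum (Finset.Icc 1 M)
              (fun B => I ^ (q * B) * m ^ (a * (M - B))) (i := j)
              (Finset.mem_Icc.mpr ⟨hj.1, by omega⟩)

end auxiliaryLemmas

theorem cancellation_maximalIdeal
    {R : Type*} [CommRing R] [IsDomain R] [IsNoetherianRing R] [IsLocalRing R]
    (hm : maximalIdeal R ≠ ⊥) (I : Ideal R) (hI : I ≠ ⊤) (p q : ℕ)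
    (hq : 1 ≤ q) (hpq : q ≤ p)
    (h : ((maximalIdeal R ^ p : Ideal R) : Set R) ⊆ integralClosureIdeal ((maximalIdeal R * I) ^ q)) :
    ((maximalIdeal R ^ (p - q) : Ideal R) : Set R) ⊆ integralClosureIdeal (I ^ q) := by
  intro x hx
  have hx' : x ∈ maximalIdeal R ^ (p - q) := hx
  set m : Ideal R := maximalIdeal R with hmdef
  -- powers of m are nonzero
  obtain ⟨y, hy, hy0⟩ := (Submodule.ne_bot_iff m).mp hm
  have hmpow : ∀ t : ℕ, m ^ t ≠ ⊥ := by
    intro t hbot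
    have hmem : y ^ t ∈ m ^ t := Ideal.pow_mem_pow hy t
    rw [hbot] at hmem
    exact pow_ne_zero t hy0 (by simpa using hmem)
  -- reduction relation from the hypothesis
  obtain ⟨k, hk, Hred⟩ := exists_reduction ((m * I) ^ q) (m ^ p) h
  set P : ℕ := p * k with hPdef
  have hP1 : 1 ≤ P := by
    have : 1 ≤ p := le_trans hq hpq
    calc 1 = 1 * 1 := by ring
      _ ≤ p * k := Nat.mul_le_mul this hk
  -- the inclusion (***) : m^P ≤ ∑_{j=1}^{k} m^(P - (p-q) j) I^(q j)
  have hstar : m ^ P ≤ ∑ j ∈ Finset.Icc 1 k, m ^ (P - (p - q) * j) * I ^ (q * j) := by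
    have h0 : m ^ P = (m ^ p) ^ k := by rw [← pow_mul]
    have h1 : (m ^ p) ^ k ≤ ((m * I) ^ q + m ^ p) ^ k := Ideal.pow_right_mono le_sup_right k
    have h2 : ((m * I) ^ q + m ^ p) ^ (k - 1)
        ≤ ∑ i ∈ Finset.range k, ((m * I) ^ q) ^ i * (m ^ p) ^ (k - 1 - i) := by
      have hb := add_pow_le_sum ((m * I) ^ q) (m ^ p) (k - 1)
      rwa [show k - 1 + 1 = k by omega] at hb
    calc m ^ P ≤ (m * I) ^ q * ((m * I) ^ q + m ^ p) ^ (k - 1) := by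
          rw [h0]; exact le_trans h1 Hred
      _ ≤ (m * I) ^ q * ∑ i ∈ Finset.range k, ((m * I) ^ q) ^ i * (m ^ p) ^ (k - 1 - i) :=
          Ideal.mul_mono_right h2
      _ = ∑ i ∈ Finset.range k, (m * I) ^ q * (((m * I) ^ q) ^ i * (m ^ p) ^ (k - 1 - i)) :=
          Finset.mul_sum _ _ _
      _ ≤ ∑ j ∈ Finset.Icc 1 k, m ^ (P - (p - q) * j) * I ^ (q * j) := by
          apply idealSum_le
          intro i hi
          rw [Finset.mem_range] at hi
          have e1 : (m * I) ^ q * (((m * I) ^ q) ^ i * (m ^ p) ^ (k - 1 - i))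
              = m ^ (q * (i + 1) + p * (k - 1 - i)) * I ^ (q * (i + 1)) := by
            rw [← mul_assoc, ← pow_succ', ← pow_mul, ← pow_mul, mul_pow, mul_right_comm,
              ← pow_add]
          have e2 : q * (i + 1) + p * (k - 1 - i) = P - (p - q) * (i + 1) := by
            have hA : q * (i + 1) ≤ p * (i + 1) := Nat.mul_le_mul_right _ hpq
            have hB : p * (i + 1) ≤ p * k := Nat.mul_le_mul_left _ (by omega)
            have hk1 : k - 1 - i = k - (i + 1) := by omega
            rw [hk1, Nat.mul_sub, Nat.sub_mul, hPdef]
            omega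
          rw [e1, e2]
          exact le_idealSum (Finset.Icc 1 k)
            (fun j => m ^ (P - (p - q) * j) * I ^ (q * j)) (i := i + 1)
            (Finset.mem_Icc.mpr ⟨by omega, by omega⟩)
  -- split into the cases p = q and p > q
  rcases Nat.eq_zero_or_pos (p - q) with ha0 | ha
  · -- case p = q : the hypothesis is contradictory
    exfalso
    rw [ha0] at hstar
    simp only [Nat.zero_mul, Nat.sub_zero] at hstar
    have hPle : m ^ P ≤ m ^ P * m := by
      refine le_trans hstar (idealSum_le _ _ _ ?_)
      intro j hj
      rw [Finset.mem_Icc] at hj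
      refine Ideal.mul_mono_right ?_
      refine le_trans (Ideal.pow_le_self ?_) (IsLocalRing.le_maximalIdeal hI)
      have : 1 ≤ q * j := Nat.mul_le_mul hq hj.1
      omega
    have hiter : ∀ t : ℕ, m ^ P ≤ m ^ P * m ^ t := by
      intro t
      induction t with
      | zero => simp
      | succ t ih =>
        calc m ^ P ≤ m ^ P * m ^ t := ih
          _ ≤ (m ^ P * m) * m ^ t := Ideal.mul_mono_left hPle
          _ = m ^ P * m ^ (t + 1) := by rw [mul_assoc, ← pow_succ']
    have hbot : m ^ P ≤ ⊥ := by
      have hle : ∀ t : ℕ, m ^ P ≤ m ^ t := fun t =>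
        le_trans (hiter t) Ideal.mul_le_right
      calc m ^ P ≤ ⨅ t : ℕ, m ^ t := le_iInf hle
        _ = ⊥ := m.iInf_pow_eq_bot_of_isLocalRing
            ((IsLocalRing.maximalIdeal.isMaximal R).ne_top)
    exact hmpow P (le_bot_iff.mp hbot)
  · -- case p > q, set a := p - q ≥ 1
    set a : ℕ := p - q with hadef
    have hPk : a * k ≤ P := by
      rw [hPdef]
      exact Nat.mul_le_mul_right k (Nat.sub_le p q)
    -- the bootstrapped inclusion at M := P
    set M : ℕ := P with hMdef
    have hM1 : 1 ≤ M := hP1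
    have hD : m ^ (a * M) ≤ ∑ B ∈ Finset.Icc 1 M, I ^ (q * B) * m ^ (a * (M - B)) :=
      main_ind m I a q P k ha hPk hstar M (Nat.le_mul_of_pos_left M ha)
    set L : Ideal R := I ^ q + m ^ a with hLdef
    have claim1 : ∀ B ∈ Finset.Icc 1 M, I ^ (q * B) * m ^ (a * (M - B)) ≤ I ^ q * L ^ (M - 1) := by
      intro B hB
      rw [Finset.mem_Icc] at hB
      have e3 : I ^ (q * B) * m ^ (a * (M - B)) = (I ^ q) ^ B * (m ^ a) ^ (M - B) := by
        rw [← pow_mul, ← pow_mul]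
      rw [e3]
      exact pow_mul_pow_le (I ^ q) L (m ^ a) le_sup_left le_sup_right hB.1 (by omega)
    have claim2 : m ^ (a * M) ≤ I ^ q * L ^ (M - 1) :=
      le_trans hD (idealSum_le _ _ _ claim1)
    have claim3 : L ^ M ≤ I ^ q * L ^ (M - 1) := by
      refine le_trans (add_pow_le_sum (I ^ q) (m ^ a) M) (idealSum_le _ _ _ ?_)
      intro i hi
      rw [Finset.mem_range] at hi
      rcases Nat.eq_zero_or_pos i with h0 | hpos
      · subst h0
        rw [pow_zero, one_mul, Nat.sub_zero, ← pow_mul]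
        exact claim2
      · exact pow_mul_pow_le (I ^ q) L (m ^ a) le_sup_left le_sup_right hpos (by omega)
    have claim4 : L ^ (M - 1) ≠ ⊥ := by
      intro hbot
      have hle : (m ^ a) ^ (M - 1) ≤ L ^ (M - 1) := Ideal.pow_right_mono le_sup_right (M - 1)
      rw [hbot, ← pow_mul] at hle
      exact hmpow (a * (M - 1)) (le_bot_iff.mp hle)
    have hxL : x ∈ L := by
      apply Submodule.mem_sup_right
      exact hx'
    have hmul : ∀ n ∈ L ^ (M - 1), x * n ∈ I ^ q * L ^ (M - 1) := by
      intro n hn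
      have hLM : x * n ∈ L ^ M := by
        have : x * n ∈ L * L ^ (M - 1) := Ideal.mul_mem_mul hxL hn
        have eLM : L * L ^ (M - 1) = L ^ M := by
          rw [← pow_succ']
          congr 1
          omega
        rwa [eLM] at this
      exact claim3 hLM
    exact mem_integralClosureIdeal_of_mul_le x (I ^ q) (L ^ (M - 1)) claim4 hmul
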